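/- Let G be a k-critical graph that is not a complete graph. Then G has no clique cutset; that is, there is no clique C of G such that the graph obtained from G by deleting the vertices of C is disconnected (or has fewer than one component's worth of interaction, i.e., C separates G). -/

import Mathlib

open SimpleGraph

/-- A graph is `k`-critical if its chromatic number equals `k` and every proper
induced subgraph is `(k-1)`-colorable. -/
def IsKCritical {V : Type*} (G : SimpleGraph V) (k : ℕ) : Prop :=
  G.chromaticNumber = k ∧ ∀ s : Set V, s ≠ Set.univ → (G.induce s).Colorable (k - 1)

/-- A set `X` of vertices is a module if every vertex outside `X` is adjacent
either to all vertices of `X` or to none of them. -/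
def IsModule {V : Type*} (G : SimpleGraph V) (X : Set V) : Prop :=
  ∀ v ∉ X, (∀ x ∈ X, G.Adj v x) ∨ (∀ x ∈ X, ¬ G.Adj v x)

/-- `G` contains no induced subgraph isomorphic to `H`. -/
def InducedFree {V W : Type*} (G : SimpleGraph V) (H : SimpleGraph W) : Prop :=
  ¬ ∃ s : Set V, Nonempty ((G.induce s) ≃g H)

/-- `G` is (P5, P5-bar)-free. -/
def P5P5barFree {V : Type*} (G : SimpleGraph V) : Prop :=
  InducedFree G (pathGraph 5) ∧ InducedFree G (pathGraph 5)ᶜ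

/-- A buoy in `G` given by its five non-empty bags. -/
structure IsBuoy {V : Type*} (G : SimpleGraph V) (B : Fin 5 → Set V) : Prop where
  nonempty : ∀ i, (B i).Nonempty
  disjoint : ∀ i j, i ≠ j → Disjoint (B i) (B j)
  adj_next : ∀ i, ∀ x ∈ B i, ∀ y ∈ B (i + 1), G.Adj x y
  not_adj_skip : ∀ i, ∀ x ∈ B i, ∀ y ∈ B (i + 2), ¬ G.Adj x y

/-- `G` is a pseudo-buoy with (possibly empty) bags `B 0, …, B 4` partitioning
its vertex set. -/
structure IsPseudoBuoy {V : Type*} (G : SimpleGraph V) (B : Fin 5 → Set V) : Prop where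
  cover : (⋃ i, B i) = Set.univ
  disjoint : ∀ i j, i ≠ j → Disjoint (B i) (B j)
  adj_next : ∀ i, ∀ x ∈ B i, ∀ y ∈ B (i + 1), G.Adj x y
  not_adj_skip : ∀ i, ∀ x ∈ B i, ∀ y ∈ B (i + 2), ¬ G.Adj x y

/-- The graph obtained from `G` by substituting `H` for the module `M`. -/
def substitute {V W : Type*} (G : SimpleGraph V) (M : Set V) (H : SimpleGraph W) :
    SimpleGraph ({v : V // v ∉ M} ⊕ W) where
  Adj x y :=
    match x, y with
    | Sum.inl a, Sum.inl b => G.Adj a b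
    | Sum.inl a, Sum.inr _ => ∃ m ∈ M, G.Adj a m
    | Sum.inr _, Sum.inl b => ∃ m ∈ M, G.Adj b m
    | Sum.inr a, Sum.inr b => H.Adj a b
  symm := ⟨by
    rintro (a | a) (b | b) h
    · exact G.adj_symm h
    · exact h
    · exact h
    · exact H.adj_symm h⟩
  loopless := ⟨by
    rintro (a | a) h
    · exact G.ne_of_adj h rfl
    · exact H.ne_of_adj h rfl⟩

/-- The join of two graphs. -/
def joinGraph {V W : Type*} (G : SimpleGraph V) (H : SimpleGraph W) :
    SimpleGraph (V ⊕ W) where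
  Adj x y :=
    match x, y with
    | Sum.inl a, Sum.inl b => G.Adj a b
    | Sum.inl _, Sum.inr _ => True
    | Sum.inr _, Sum.inl _ => True
    | Sum.inr a, Sum.inr b => H.Adj a b
  symm := ⟨by
    rintro (a | a) (b | b) h
    · exact G.adj_symm h
    · trivial
    · trivial
    · exact H.adj_symm h⟩
  loopless := ⟨by
    rintro (a | a) h
    · exact G.ne_of_adj h rfl
    · exact H.ne_of_adj h rfl⟩

/-- A `k`-critical graph that is not complete has no clique cutset. -/
theorem no_clique_cutset_of_critical {V : Type*} [Fintype V]
    (G : SimpleGraph V) (k : ℕ) (hk : 1 ≤ k) (hG : IsKCritical G k)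
    (hnc : G ≠ ⊤) :
    ¬ ∃ C : Set V, G.IsClique C ∧ ¬ (G.induce (Cᶜ : Set V)).Preconnected := by
  classical
  rintro ⟨C, hC, hpre⟩
  obtain ⟨hchrom, hcol⟩ := hG
  rw [Preconnected] at hpre
  push_neg at hpre
  obtain ⟨u, v, huv⟩ := hpre
  -- A : reachable part
  set A : Set V := {x | ∃ hx : x ∈ (Cᶜ : Set V), (G.induce (Cᶜ : Set V)).Reachable u ⟨x, hx⟩} with hA
  have hAsub : A ⊆ (Cᶜ : Set V) := fun x hx => hx.1
  have huA : (u : V) ∈ A := ⟨u.2, Reachable.refl _⟩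
  have hvA : (v : V) ∉ A := by
    rintro ⟨hv, hr⟩
    exact huv (by convert hr)
  set s₁ : Set V := A ∪ C with hs₁
  set s₂ : Set V := Aᶜ with hs₂
  have hCs₂ : C ⊆ s₂ := fun x hx hxA => (hAsub hxA) hx
  have hs₁ne : s₁ ≠ Set.univ := by
    intro h
    have : (v : V) ∈ s₁ := h ▸ Set.mem_univ _
    rcases this with h1 | h2
    · exact hvA h1
    · exact v.2 h2
  have hs₂ne : s₂ ≠ Set.univ := by
    intro h
    have : (u : V) ∈ s₂ := h ▸ Set.mem_univ _
    exact this huA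
  obtain ⟨c₁⟩ := hcol s₁ hs₁ne
  obtain ⟨c₂⟩ := hcol s₂ hs₂ne
  -- f, g on C
  set f : C → Fin (k - 1) := fun x => c₁ ⟨x.1, Or.inr x.2⟩ with hf
  set g : C → Fin (k - 1) := fun x => c₂ ⟨x.1, hCs₂ x.2⟩ with hg
  have hfinj : Function.Injective f := by
    intro x y hxy
    by_contra hne
    have hadj : G.Adj x.1 y.1 := hC x.2 y.2 (fun h => hne (Subtype.ext h))
    exact c₁.valid (by exact hadj : (G.induce s₁).Adj ⟨x.1, Or.inr x.2⟩ ⟨y.1, Or.inr y.2⟩) hxy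
  have hginj : Function.Injective g := by
    intro x y hxy
    by_contra hne
    have hadj : G.Adj x.1 y.1 := hC x.2 y.2 (fun h => hne (Subtype.ext h))
    exact c₂.valid (by exact hadj : (G.induce s₂).Adj ⟨x.1, hCs₂ x.2⟩ ⟨y.1, hCs₂ y.2⟩) hxy
  set e : {i : Fin (k-1) // i ∈ Set.range g} ≃ {i : Fin (k-1) // i ∈ Set.range f} :=
    (Equiv.ofInjective g hginj).symm.trans (Equiv.ofInjective f hfinj) with he
  set σ : Equiv.Perm (Fin (k-1)) := e.extendSubtype with hσ
  have hσg : ∀ x : C, σ (g x) = f x := by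
    intro x
    rw [hσ, e.extendSubtype_apply_of_mem _ ⟨x, rfl⟩]
    rw [he]
    simp only [Equiv.trans_apply, Equiv.ofInjective_symm_apply, Equiv.ofInjective_apply]
  -- total coloring
  have hmem : ∀ x : V, x ∉ s₁ → x ∈ s₂ := fun x hx hxA => hx (Or.inl hxA)
  set c : V → Fin (k-1) := fun x => if h : x ∈ s₁ then c₁ ⟨x, h⟩ else σ (c₂ ⟨x, hmem x h⟩) with hc
  have key : ∀ x (hx : x ∈ C), c x = σ (c₂ ⟨x, hCs₂ hx⟩) := by
    intro x hx
    have : c x = c₁ ⟨x, Or.inr hx⟩ := dif_pos (Or.inr hx)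
    rw [this]
    exact (hσg ⟨x, hx⟩).symm
  have hnoAB : ∀ x ∈ A, ∀ y, G.Adj x y → y ∉ s₁ → False := by
    intro x hx y hxy hy
    have hyC : y ∈ (Cᶜ : Set V) := fun h => hy (Or.inr h)
    obtain ⟨hxc, hr⟩ := hx
    have : (G.induce (Cᶜ : Set V)).Adj ⟨x, hxc⟩ ⟨y, hyC⟩ := hxy
    exact hy (Or.inl ⟨hyC, hr.trans this.reachable⟩)
  have hvalid : ∀ x y : V, G.Adj x y → c x ≠ c y := by
    intro x y hxy
    by_cases hx : x ∈ s₁ <;> by_cases hy : y ∈ s₁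
    · have := c₁.valid (by exact hxy : (G.induce s₁).Adj ⟨x, hx⟩ ⟨y, hy⟩)
      simpa [hc, dif_pos hx, dif_pos hy] using this
    · -- x ∈ s₁, y ∉ s₁
      rcases hx with hxA | hxC
      · exact absurd (hnoAB x hxA y hxy hy) not_false
      · have h2 := c₂.valid (by exact hxy : (G.induce s₂).Adj ⟨x, hCs₂ hxC⟩ ⟨y, hmem y hy⟩)
        rw [key x hxC]
        rw [hc]; simp only [dif_neg hy]
        exact fun h => h2 (σ.injective h)
    · rcases hy with hyA | hyC
      · exact absurd (hnoAB y hyA x hxy.symm hx) not_false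
      · have h2 := c₂.valid (by exact hxy : (G.induce s₂).Adj ⟨x, hmem x hx⟩ ⟨y, hCs₂ hyC⟩)
        rw [key y hyC]
        rw [hc]; simp only [dif_neg hx]
        exact fun h => h2 (σ.injective h)
    · have h2 := c₂.valid (by exact hxy : (G.induce s₂).Adj ⟨x, hmem x hx⟩ ⟨y, hmem y hy⟩)
      rw [hc]; simp only [dif_neg hx, dif_neg hy]
      exact fun h => h2 (σ.injective h)
  have hcolG : G.Colorable (k - 1) := ⟨Coloring.mk c (fun {x y} h => hvalid x y h)⟩
  have hle := hcolG.chromaticNumber_le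
  rw [hchrom] at hle
  have : (k : ℕ∞) ≤ (k - 1 : ℕ) := hle
  have : k ≤ k - 1 := by exact_mod_cast this
  omega
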